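/- For any real stable polynomial p(z₁,...,zₙ) and any indices 1 ≤ i, j ≤ n, the polynomial (1 - ∂_{zᵢ}∂_{zⱼ}) p is real stable. -/

import Mathlib

open Polynomial Filter

private lemma eval_derivative_prod (x : ℂ) (s : Multiset ℂ) (h : ∀ r ∈ s, x - r ≠ 0) :
    (derivative (s.map fun a => X - C a).prod).eval x
      = ((s.map fun a => X - C a).prod).eval x * (s.map fun r => (x - r)⁻¹).sum := by
  induction s using Multiset.induction_on with
  | empty => simp
  | cons r t ih =>
    have hr : x - r ≠ 0 := h r (Multiset.mem_cons_self r t)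
    have ht : ∀ a ∈ t, x - a ≠ 0 := fun a ha => h a (Multiset.mem_cons_of_mem ha)
    simp only [Multiset.map_cons, Multiset.prod_cons, derivative_mul, derivative_sub,
      derivative_X, derivative_C, sub_zero, one_mul, eval_add, eval_mul, eval_sub, eval_X,
      eval_C, Multiset.sum_cons, ih ht]
    field_simp

private lemma logderiv_eq (f : ℂ[X]) (x : ℂ) (hroots : ∀ r ∈ f.roots, x - r ≠ 0) :
    f.derivative.eval x = f.eval x * (f.roots.map fun r => (x - r)⁻¹).sum := by
  have hcard : Multiset.card f.roots = f.natDegree :=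
    (Polynomial.splits_iff_card_roots).mp (IsAlgClosed.splits f)
  set s := f.roots with hs
  have hf : C f.leadingCoeff * (s.map fun a => X - C a).prod = f :=
    Polynomial.C_leadingCoeff_mul_prod_multiset_X_sub_C hcard
  rw [← hf, derivative_C_mul, eval_mul, eval_mul, eval_C,
    eval_derivative_prod x _ hroots]
  ring

private lemma im_sum_nonpos (x : ℂ) (s : Multiset ℂ) (h : ∀ r ∈ s, 0 < (x - r).im) :
    ((s.map fun r => (x - r)⁻¹).sum).im ≤ 0 ∧ (s ≠ 0 → ((s.map fun r => (x - r)⁻¹).sum).im < 0) := by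
  induction s using Multiset.induction_on with
  | empty => simp
  | cons r t ih =>
    have hr : 0 < (x - r).im := h r (Multiset.mem_cons_self r t)
    have hterm : ((x - r)⁻¹).im < 0 := by
      rw [Complex.inv_im]
      have hne : x - r ≠ 0 := fun h0 => by simp [h0] at hr
      have : 0 < Complex.normSq (x - r) := Complex.normSq_pos.mpr hne
      exact div_neg_of_neg_of_pos (by linarith) this
    have ht := ih (fun a ha => h a (Multiset.mem_cons_of_mem ha))
    constructor
    · simp only [Multiset.map_cons, Multiset.sum_cons, Complex.add_im]
      linarith [ht.1]
    · intro _
      simp only [Multiset.map_cons, Multiset.sum_cons, Complex.add_im]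
      linarith [ht.1]


private lemma stable_key (f : ℂ[X]) (hf : ∀ y : ℂ, 0 < y.im → f.eval y ≠ 0)
    (x : ℂ) (hx : 0 < x.im) :
    ∃ T : ℂ, f.derivative.eval x = f.eval x * T ∧ T.im ≤ 0 ∧ (T ≠ 0 → T.im < 0) := by
  have hroots : ∀ r ∈ f.roots, 0 < (x - r).im := by
    intro r hr
    have hr0 : f.IsRoot r := (Polynomial.mem_roots'.mp hr).2
    have : ¬ 0 < r.im := fun h => hf r h hr0
    have : r.im ≤ 0 := le_of_not_gt this
    simp only [Complex.sub_im]
    linarith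
  have hne : ∀ r ∈ f.roots, x - r ≠ 0 := by
    intro r hr h0
    have := hroots r hr
    rw [h0] at this
    simp at this
  refine ⟨(f.roots.map fun r => (x - r)⁻¹).sum, logderiv_eq f x hne, (im_sum_nonpos x _ hroots).1, ?_⟩
  intro hT
  rcases eq_or_ne f.roots 0 with h0 | h0
  · simp [h0] at hT
  · exact (im_sum_nonpos x _ hroots).2 h0

private lemma neg_inv_im_neg {T : ℂ} (hT : T.im < 0) : (-T⁻¹).im < 0 := by
  have hTne0 : T ≠ 0 := fun h => by simp [h] at hT
  rw [Complex.neg_im, Complex.inv_im]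
  have : 0 < Complex.normSq T := Complex.normSq_pos.mpr hTne0
  have : -T.im / Complex.normSq T > 0 := div_pos (by linarith) this
  linarith

private lemma stable_add_smul_deriv (f : ℂ[X]) (hf : ∀ y : ℂ, 0 < y.im → f.eval y ≠ 0)
    (x : ℂ) (hx : 0 < x.im) (w : ℂ) (hw : 0 < w.im) :
    f.eval x + w * f.derivative.eval x ≠ 0 := by
  obtain ⟨T, hT, _, hT2⟩ := stable_key f hf x hx
  have hfx : f.eval x ≠ 0 := hf x hx
  rw [hT]
  intro h
  have hprod : f.eval x * (1 + w * T) = 0 := by linear_combination h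
  have h1 : 1 + w * T = 0 := (mul_eq_zero.mp hprod).resolve_left hfx
  rcases eq_or_ne T 0 with h0 | h0
  · rw [h0] at h1; simp at h1
  · have hw' : w = -T⁻¹ := by
      field_simp at h1 ⊢
      linear_combination h1
    rw [hw'] at hw
    exact absurd hw (not_lt.mpr (le_of_lt (neg_inv_im_neg (hT2 h0))))


private lemma open_map_contra {g : ℂ → ℂ} {x₁ : ℂ} (hg : AnalyticAt ℂ g x₁)
    {U : Set ℂ} (hU : IsOpen U) (hx₁ : x₁ ∈ U) (hbound : ∀ x ∈ U, (g x).im ≤ (g x₁).im) :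
    ∀ᶠ x in nhds x₁, g x = g x₁ := by
  rcases hg.eventually_constant_or_nhds_le_map_nhds with h | h
  · exact h
  · exfalso
    have hUm : U ∈ nhds x₁ := hU.mem_nhds hx₁
    have himg : g '' U ∈ nhds (g x₁) :=
      h (Filter.image_mem_map hUm)
    obtain ⟨ε, hε, hball⟩ := Metric.mem_nhds_iff.mp himg
    have hq : g x₁ + ((ε/2 : ℝ) : ℂ) * Complex.I ∈ Metric.ball (g x₁) ε := by
      simp only [Metric.mem_ball, Complex.dist_eq, add_sub_cancel_left]
      rw [norm_mul]
      simp [abs_of_pos hε]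
      linarith
    obtain ⟨x, hxU, hgx⟩ := hball hq
    have := hbound x hxU
    rw [hgx] at this
    simp only [Complex.add_im, Complex.mul_im, Complex.I_im, Complex.I_re,
      Complex.ofReal_re, Complex.ofReal_im] at this
    linarith

private lemma poly_eq_of_eventually {A B : ℂ[X]} {x₁ c : ℂ} (hB : B.eval x₁ ≠ 0)
    (h : ∀ᶠ x in nhds x₁, A.eval x / B.eval x = c) : A = C c * B := by
  have hBne : ∀ᶠ x in nhds x₁, B.eval x ≠ 0 :=
    (B.continuous.continuousAt).eventually_ne hB
  have hroot : ∀ᶠ x in nhds x₁, (A - C c * B).IsRoot x := by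
    filter_upwards [h, hBne] with x h1 h2
    simp only [IsRoot, eval_sub, eval_mul, eval_C]
    field_simp at h1
    linear_combination h1
  obtain ⟨s, hs, hsub⟩ := hroot.exists_mem
  have hinf : {x : ℂ | (A - C c * B).IsRoot x}.Infinite :=
    Set.Infinite.mono hsub (infinite_of_mem_nhds x₁ hs)
  have := Polynomial.eq_zero_of_infinite_isRoot _ hinf
  linear_combination this

private lemma LS (P S : ℂ[X]) (hP : ∀ x : ℂ, 0 < x.im → P.eval x ≠ 0)
    (hPS : ∀ x : ℂ, 0 < x.im → ∀ w : ℂ, 0 < w.im → P.eval x + w * S.eval x ≠ 0)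
    (x₀ : ℂ) (hx₀ : 0 < x₀.im) : P.eval x₀ - S.derivative.eval x₀ ≠ 0 := by
  by_cases hS0 : S = 0
  · simpa [hS0] using hP x₀ hx₀
  have hfrac : ∀ x : ℂ, 0 < x.im → S.eval x ≠ 0 → 0 ≤ (P.eval x / S.eval x).im := by
    intro x hx hSx
    by_contra hlt
    push_neg at hlt
    have hw : 0 < (-(P.eval x / S.eval x)).im := by
      rw [Complex.neg_im]; linarith
    apply hPS x hx _ hw
    field_simp
    ring
  have hUopen : IsOpen {x : ℂ | 0 < x.im} :=
    isOpen_lt continuous_const Complex.continuous_im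
  -- Step 1 : S is nonvanishing on the upper half plane
  have hSnv : ∀ x : ℂ, 0 < x.im → S.eval x ≠ 0 := by
    intro x₁ hx₁
    by_contra hS1
    have hg : AnalyticAt ℂ (fun x => S.eval x / P.eval x) x₁ :=
      ((S.differentiable.analyticAt x₁)).div ((P.differentiable.analyticAt x₁)) (hP x₁ hx₁)
    have hval : S.eval x₁ / P.eval x₁ = 0 := by rw [hS1, zero_div]
    have hbound : ∀ x ∈ {x : ℂ | 0 < x.im},
        ((fun x => S.eval x / P.eval x) x).im ≤ ((fun x => S.eval x / P.eval x) x₁).im := by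
      intro x hx
      simp only [Set.mem_setOf_eq] at hx
      simp only [hval, Complex.zero_im]
      rcases eq_or_ne (S.eval x) 0 with h | h
      · simp [h]
      · have h1 : S.eval x / P.eval x = (P.eval x / S.eval x)⁻¹ := by rw [inv_div]
        rw [h1, Complex.inv_im]
        have h2 := hfrac x hx h
        have h3 : 0 < Complex.normSq (P.eval x / S.eval x) :=
          Complex.normSq_pos.mpr (div_ne_zero (hP x hx) h)
        apply div_nonpos_of_nonpos_of_nonneg <;> linarith
    have hev := open_map_contra hg hUopen (by exact hx₁) hbound
    simp only [hval] at hev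
    have : S = C 0 * P := poly_eq_of_eventually (hP x₁ hx₁) hev
    rw [map_zero, zero_mul] at this
    exact hS0 this
  -- Step 2
  obtain ⟨T, hTeq, hTle, hTlt⟩ := stable_key S hSnv x₀ hx₀
  have hS₀ := hSnv x₀ hx₀
  by_cases hstrict : ∀ x : ℂ, 0 < x.im → 0 < (P.eval x / S.eval x).im
  · intro h
    have him := hstrict x₀ hx₀
    have hPx : P.eval x₀ = S.eval x₀ * T := by rw [← hTeq]; linear_combination h
    rw [hPx, mul_div_cancel_left₀ T hS₀] at him
    linarith
  · push_neg at hstrict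
    obtain ⟨x₂, hx₂, hle⟩ := hstrict
    have hS₂ := hSnv x₂ hx₂
    have hρim : (P.eval x₂ / S.eval x₂).im = 0 := le_antisymm hle (hfrac x₂ hx₂ hS₂)
    set ρ := P.eval x₂ / S.eval x₂ with hρdef
    have hg : AnalyticAt ℂ (fun x => -(P.eval x / S.eval x)) x₂ :=
      (((P.differentiable.analyticAt x₂)).div ((S.differentiable.analyticAt x₂)) hS₂).neg
    have hbound : ∀ x ∈ {x : ℂ | 0 < x.im},
        ((fun x => -(P.eval x / S.eval x)) x).im ≤ ((fun x => -(P.eval x / S.eval x)) x₂).im := by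
      intro x hx
      simp only [Set.mem_setOf_eq] at hx
      simp only [Complex.neg_im, ← hρdef, hρim, neg_zero]
      have := hfrac x hx (hSnv x hx)
      linarith
    have hev := open_map_contra hg hUopen (by exact hx₂) hbound
    have hev2 : ∀ᶠ x in nhds x₂, P.eval x / S.eval x = ρ := by
      filter_upwards [hev] with x hx
      have := neg_injective hx
      rwa [← hρdef] at this
    have hPC : P = C ρ * S := poly_eq_of_eventually hS₂ hev2
    have hρ0 : ρ ≠ 0 := by
      intro h0
      exact hP x₀ hx₀ (by rw [hPC, h0, map_zero, zero_mul, eval_zero])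
    intro hcontra
    have hPx : P.eval x₀ = ρ * S.eval x₀ := by rw [hPC, eval_mul, eval_C]
    rw [hTeq, hPx] at hcontra
    have h2 : S.eval x₀ * (ρ - T) = 0 := by linear_combination hcontra
    have h3 : ρ = T := by
      have := (mul_eq_zero.mp h2).resolve_left hS₀
      linear_combination this
    rcases eq_or_ne T 0 with h4 | h4
    · exact hρ0 (h3.trans h4)
    · have := hTlt h4
      rw [h3] at hρim
      linarith


noncomputable def uslice {n : ℕ} (z : Fin n → ℂ) (i : Fin n) :
    MvPolynomial (Fin n) ℝ →ₐ[ℝ] Polynomial ℂ :=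
  MvPolynomial.aeval (fun k => if k = i then Polynomial.X else Polynomial.C (z k))

lemma uslice_eval {n : ℕ} (z : Fin n → ℂ) (i : Fin n) (p : MvPolynomial (Fin n) ℝ) (x : ℂ) :
    (uslice z i p).eval x = MvPolynomial.aeval (Function.update z i x) p := by
  induction p using MvPolynomial.induction_on with
  | C a => simp [uslice, MvPolynomial.aeval_C, Polynomial.algebraMap_apply]
  | add p q hp hq => simp only [map_add, eval_add, hp, hq]
  | mul_X p k hp =>
    simp only [map_mul, eval_mul, hp, MvPolynomial.aeval_X, uslice]
    congr 1
    by_cases hk : k = i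
    · subst hk; simp [Function.update_self]
    · simp [if_neg hk, Function.update_apply, hk]

lemma uslice_derivative {n : ℕ} (z : Fin n → ℂ) (i : Fin n) (p : MvPolynomial (Fin n) ℝ) :
    (uslice z i p).derivative = uslice z i (MvPolynomial.pderiv i p) := by
  induction p using MvPolynomial.induction_on with
  | C a =>
    simp [uslice, MvPolynomial.aeval_C, Polynomial.algebraMap_apply]
  | add p q hp hq =>
    simp only [map_add, derivative_add, hp, hq]
  | mul_X p k hp =>
    by_cases hk : k = i
    · subst hk
      have hX : uslice z k (MvPolynomial.X k) = X := by simp [uslice]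
      rw [map_mul, derivative_mul, hX, derivative_X, mul_one,
        MvPolynomial.pderiv_mul, MvPolynomial.pderiv_X_self, map_add, map_mul, map_mul, hX, hp,
        map_one, mul_one]
    · have hX : uslice z i (MvPolynomial.X k) = C (z k) := by simp [uslice, if_neg hk]
      have hpd : MvPolynomial.pderiv i (MvPolynomial.X k : MvPolynomial (Fin n) ℝ) = 0 := by
        rw [MvPolynomial.pderiv_X, Pi.single_eq_of_ne hk]
      rw [map_mul, derivative_mul, hX, derivative_C, mul_zero, add_zero,
        MvPolynomial.pderiv_mul, hpd, mul_zero, map_add, map_mul, map_zero, add_zero, hX, hp]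


theorem one_sub_pderiv_pderiv_stable (n : ℕ) (p : MvPolynomial (Fin n) ℝ) (i j : Fin n)
    (hp : p = 0 ∨ ∀ z : Fin n → ℂ, (∀ k, 0 < (z k).im) → MvPolynomial.aeval z p ≠ 0) :
    (p - MvPolynomial.pderiv i (MvPolynomial.pderiv j p)) = 0 ∨
      ∀ z : Fin n → ℂ, (∀ k, 0 < (z k).im) →
        MvPolynomial.aeval z (p - MvPolynomial.pderiv i (MvPolynomial.pderiv j p)) ≠ 0 := by
  rcases hp with h0 | hp
  · left; simp [h0]
  · right
    intro z hz
    have hupd : ∀ (ζ : Fin n → ℂ), (∀ k, 0 < (ζ k).im) → ∀ (m : Fin n) (x : ℂ), 0 < x.im →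
        ∀ k, 0 < ((Function.update ζ m x) k).im := by
      intro ζ hζ m x hx k
      rw [Function.update_apply]
      split
      · exact hx
      · exact hζ k
    set P : Polynomial ℂ := uslice z i p with hP
    set S : Polynomial ℂ := uslice z i (MvPolynomial.pderiv j p) with hS
    have hPnv : ∀ x : ℂ, 0 < x.im → P.eval x ≠ 0 := by
      intro x hx
      rw [hP, uslice_eval]
      exact hp _ (hupd z hz i x hx)
    have hPS : ∀ x : ℂ, 0 < x.im → ∀ w : ℂ, 0 < w.im → P.eval x + w * S.eval x ≠ 0 := by
      intro x hx w hw
      set ζ := Function.update z i x with hζdef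
      have hζ : ∀ k, 0 < (ζ k).im := hupd z hz i x hx
      set f : Polynomial ℂ := uslice ζ j p with hf
      have hfnv : ∀ y : ℂ, 0 < y.im → f.eval y ≠ 0 := by
        intro y hy
        rw [hf, uslice_eval]
        exact hp _ (hupd ζ hζ j y hy)
      have h1 : f.eval (ζ j) = P.eval x := by
        rw [hf, uslice_eval, Function.update_eq_self, hP, uslice_eval]
      have h2 : f.derivative.eval (ζ j) = S.eval x := by
        rw [hf, uslice_derivative, uslice_eval, Function.update_eq_self, hS, uslice_eval]
      have := stable_add_smul_deriv f hfnv (ζ j) (hζ j) w hw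
      rwa [h1, h2] at this
    have key := LS P S hPnv hPS (z i) (hz i)
    rw [map_sub]
    have e1 : MvPolynomial.aeval z p = P.eval (z i) := by
      rw [hP, uslice_eval, Function.update_eq_self]
    have e2 : MvPolynomial.aeval z (MvPolynomial.pderiv i (MvPolynomial.pderiv j p))
        = S.derivative.eval (z i) := by
      rw [hS, uslice_derivative, uslice_eval, Function.update_eq_self]
    rw [e1, e2]
    exact key
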